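/- No weird space is a compact linearly ordered topological space (LOTS). -/

import Mathlib

/-- A space is scattered iff every nonempty subset has a point isolated in it. -/
def ScatteredSpace (X : Type*) [TopologicalSpace X] : Prop :=
  ∀ S : Set X, S.Nonempty → ∃ x ∈ S, ∃ U : Set X, IsOpen U ∧ U ∩ S = {x}

/-- A space is weird iff it is compact Hausdorff, not scattered, and no subset
is simultaneously perfect (closed, nonempty, no isolated points) and totally
disconnected. -/
def Weird (X : Type*) [TopologicalSpace X] : Prop :=
  CompactSpace X ∧ T2Space X ∧ ¬ ScatteredSpace X ∧
    ∀ P : Set X, Perfect P → P.Nonempty → ¬ IsTotallyDisconnected P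

theorem stmt4 (X : Type*) [TopologicalSpace X] [LinearOrder X] [OrderTopology X]
    [CompactSpace X] : ¬ Weird X := by
  rintro ⟨_hcomp, hT2, hnotsc, hperf⟩
  haveI := hT2
  -- from non-scatteredness, get a nonempty preperfect set
  rw [ScatteredSpace] at hnotsc
  push_neg at hnotsc
  obtain ⟨S, hSne, hS⟩ := hnotsc
  have hpre : Preperfect S := by
    intro x hx
    rw [accPt_iff_nhds]
    intro U hU
    obtain ⟨V, hVU, hVopen, hxV⟩ := mem_nhds_iff.mp hU
    have hne := hS x hx V hVopen
    by_contra h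
    push_neg at h
    apply hne
    apply Set.eq_singleton_iff_unique_mem.mpr
    refine ⟨⟨hxV, hx⟩, fun y hy => ?_⟩
    by_contra hyx
    exact hyx (h y ⟨hVU hy.1, hy.2⟩)
  have hperfS : Perfect (closure S) := hpre.perfect_closure
  have hTD := hperf _ hperfS hSne.closure
  rw [IsTotallyDisconnected] at hTD
  push_neg at hTD
  obtain ⟨t, _htP, htconn, htns⟩ := hTD
  obtain ⟨x0, hx0, y0, hy0, hxy⟩ := htns
  -- main argument: a preconnected set with two points a < b yields a contradiction
  have key : ∀ a b : X, a ∈ t → b ∈ t → a < b → False := by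
    intro a b ha hb hab
    have hIcc : Set.Icc a b ⊆ t := (htconn.ordConnected).out ha hb
    -- density between a and b
    have hdense : ∀ u v : X, a ≤ u → v ≤ b → u < v → (Set.Ioo u v).Nonempty := by
      intro u v hu hv huv
      by_contra hempty
      rw [Set.not_nonempty_iff_eq_empty] at hempty
      have hut : u ∈ t := hIcc ⟨hu, le_trans huv.le hv⟩
      have hvt : v ∈ t := hIcc ⟨le_trans hu huv.le, hv⟩
      have hcover : t ⊆ Set.Iio v ∪ Set.Ioi u := by
        intro z _
        rcases lt_or_ge z v with h | h
        · exact Or.inl h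
        · exact Or.inr (lt_of_lt_of_le huv h)
      obtain ⟨z, _, hz1, hz2⟩ :=
        htconn (Set.Iio v) (Set.Ioi u) isOpen_Iio isOpen_Ioi hcover
          ⟨u, hut, huv⟩ ⟨v, hvt, huv⟩
      have : z ∈ Set.Ioo u v := ⟨hz2, hz1⟩
      rw [hempty] at this
      exact this
    -- Zorn: maximal family of open intervals in (a,b) with pairwise disjoint closed hulls
    set 𝒢 : Set (Set (X × X)) :=
      {G | (∀ pq ∈ G, a < pq.1 ∧ pq.1 < pq.2 ∧ pq.2 < b) ∧
        (∀ pq ∈ G, ∀ pq' ∈ G, pq ≠ pq' →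
          Set.Icc pq.1 pq.2 ∩ Set.Icc pq'.1 pq'.2 = ∅)} with h𝒢
    obtain ⟨G, hGmax⟩ := zorn_subset 𝒢 (by
      intro c hc hchain
      refine ⟨⋃₀ c, ⟨?_, ?_⟩, fun s hs => Set.subset_sUnion_of_mem hs⟩
      · rintro pq ⟨g, hg, hpq⟩
        exact (hc hg).1 pq hpq
      · rintro pq ⟨g, hg, hpq⟩ pq' ⟨g', hg', hpq'⟩ hne
        rcases hchain.total hg hg' with h | h
        · exact (hc hg').2 pq (h hpq) pq' hpq' hne
        · exact (hc hg).2 pq hpq pq' (h hpq') hne)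
    have hG : G ∈ 𝒢 := hGmax.prop
    set Ω : Set X := ⋃ pq ∈ G, Set.Ioo pq.1 pq.2 with hΩdef
    have memΩ : ∀ z : X, z ∈ Ω ↔ ∃ pq ∈ G, z ∈ Set.Ioo pq.1 pq.2 := by
      intro z
      simp only [hΩdef, Set.mem_iUnion, Set.mem_Ioo, Prod.exists]
      tauto
    have hΩopen : IsOpen Ω := isOpen_biUnion (fun pq _ => isOpen_Ioo)
    set P : Set X := Set.Icc a b \ Ω with hPdef
    -- endpoints of gaps belong to P
    have hEnd : ∀ pq ∈ G, pq.1 ∈ P ∧ pq.2 ∈ P := by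
      intro pq hpq
      obtain ⟨h1, h2, h3⟩ := hG.1 pq hpq
      constructor
      · refine ⟨⟨h1.le, (h2.trans h3).le⟩, fun hzΩ => ?_⟩
        obtain ⟨pq', hpq', hz'⟩ := (memΩ _).mp hzΩ
        rcases eq_or_ne pq pq' with rfl | hne
        · exact lt_irrefl _ hz'.1
        · have hdisj := hG.2 pq hpq pq' hpq' hne
          have : pq.1 ∈ (∅ : Set X) :=
            hdisj ▸ ⟨⟨le_refl _, h2.le⟩, Set.Ioo_subset_Icc_self hz'⟩
          exact this
      · refine ⟨⟨(h1.trans h2).le, h3.le⟩, fun hzΩ => ?_⟩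
        obtain ⟨pq', hpq', hz'⟩ := (memΩ _).mp hzΩ
        rcases eq_or_ne pq pq' with rfl | hne
        · exact lt_irrefl _ hz'.2
        · have hdisj := hG.2 pq hpq pq' hpq' hne
          have : pq.2 ∈ (∅ : Set X) :=
            hdisj ▸ ⟨⟨h2.le, le_refl _⟩, Set.Ioo_subset_Icc_self hz'⟩
          exact this
    -- Ω is dense in (a, b): every nonempty subinterval meets Ω
    have hΩdense : ∀ u v : X, a ≤ u → v ≤ b → u < v → ∃ g ∈ Set.Ioo u v, g ∈ Ω := by
      intro u v hu hv huv
      by_contra hno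
      push_neg at hno
      obtain ⟨m, hm⟩ := hdense u v hu hv huv
      obtain ⟨c, hc⟩ := hdense u m hu (hm.2.le.trans hv) hm.1
      obtain ⟨d, hd⟩ := hdense m v (hu.trans hm.1.le) hv hm.2
      -- add the interval (c, d) to G
      have hIccsub : Set.Icc c d ⊆ Set.Ioo u v := by
        intro z hz
        exact ⟨lt_of_lt_of_le hc.1 hz.1, lt_of_le_of_lt hz.2 hd.2⟩
      have hnew : ∀ pq ∈ G, Set.Icc c d ∩ Set.Icc pq.1 pq.2 = ∅ := by
        intro pq hpq
        obtain ⟨h1, h2, h3⟩ := hG.1 pq hpq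
        rw [Set.eq_empty_iff_forall_notMem]
        rintro z ⟨hz1, hz2⟩
        have hzuv : z ∈ Set.Ioo u v := hIccsub hz1
        rcases lt_or_eq_of_le hz2.1 with hlt | heq
        · rcases lt_or_eq_of_le hz2.2 with hlt' | heq'
          · exact hno z hzuv ((memΩ z).mpr ⟨pq, hpq, hlt, hlt'⟩)
          · -- z = pq.2, so pq.2 ∈ (u,v); find a point of Ω in (u,v)
            obtain ⟨w, hw⟩ := hdense (max pq.1 u) pq.2
              (le_trans hu (le_max_right _ _)) h3.le
              (max_lt h2 (heq' ▸ hzuv.1))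
            have hwΩ : w ∈ Ω := (memΩ w).mpr
              ⟨pq, hpq, lt_of_le_of_lt (le_max_left _ _) hw.1, hw.2⟩
            have hwuv : w ∈ Set.Ioo u v :=
              ⟨lt_of_le_of_lt (le_max_right _ _) hw.1, hw.2.trans (heq' ▸ hzuv.2)⟩
            exact hno w hwuv hwΩ
        · -- z = pq.1 (heq : pq.1 = z), so pq.1 ∈ (u,v)
          obtain ⟨w, hw⟩ := hdense pq.1 (min pq.2 v) h1.le
            (le_trans (min_le_right _ _) hv) (lt_min h2 (heq ▸ hzuv.2))
          have hwΩ : w ∈ Ω := (memΩ w).mpr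
            ⟨pq, hpq, hw.1, lt_of_lt_of_le hw.2 (min_le_left _ _)⟩
          have hwuv : w ∈ Set.Ioo u v :=
            ⟨(heq ▸ hzuv.1).trans hw.1, lt_of_lt_of_le hw.2 (min_le_right _ _)⟩
          exact hno w hwuv hwΩ
      have hG' : insert (c, d) G ∈ 𝒢 := by
        constructor
        · rintro pq (rfl | hpq)
          · exact ⟨lt_of_le_of_lt hu hc.1, hc.2.trans hd.1, lt_of_lt_of_le hd.2 hv⟩
          · exact hG.1 pq hpq
        · rintro pq (rfl | hpq) pq' (rfl | hpq') hne
          · exact absurd rfl hne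
          · exact hnew pq' hpq'
          · rw [Set.inter_comm]; exact hnew pq hpq
          · exact hG.2 pq hpq pq' hpq' hne
      have hsub : G ⊆ insert (c, d) G := Set.subset_insert _ _
      have heq : insert (c, d) G = G :=
        Set.Subset.antisymm (hGmax.2 hG' hsub) hsub
      have hcd : (c, d) ∈ G := heq ▸ Set.mem_insert _ _
      have : m ∈ Ω := (memΩ m).mpr ⟨(c, d), hcd, hc.2, hd.1⟩
      exact hno m hm this
    -- P is closed
    have hPclosed : IsClosed P := IsClosed.inter isClosed_Icc hΩopen.isClosed_compl
    -- a ∈ P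
    have haP : a ∈ P := by
      refine ⟨⟨le_refl a, hab.le⟩, fun hmem => ?_⟩
      obtain ⟨pq, hpq, hz⟩ := (memΩ a).mp hmem
      exact absurd hz.1 (not_lt_of_gt (hG.1 pq hpq).1)
    -- approach from the right
    have hR : ∀ x ∈ P, (∀ pq ∈ G, x ≠ pq.1) → ∀ w, x < w → w ≤ b →
        ∃ y ∈ P, y ≠ x ∧ x < y ∧ y < w := by
      intro x hx hxp w hxw hwb
      obtain ⟨m, hm⟩ := hdense x w hx.1.1 hwb hxw
      by_cases hmΩ : m ∈ Ω
      · obtain ⟨pq, hpq, hz⟩ := (memΩ m).mp hmΩ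
        have hxq : x < pq.2 := hm.1.trans hz.2
        have hxnotin : x ∉ Set.Ioo pq.1 pq.2 := fun hc => hx.2 ((memΩ x).mpr ⟨pq, hpq, hc⟩)
        have hxle : x ≤ pq.1 := by
          by_contra hgt
          exact hxnotin ⟨lt_of_not_ge hgt, hxq⟩
        have hxlt : x < pq.1 := lt_of_le_of_ne hxle (hxp pq hpq)
        exact ⟨pq.1, (hEnd pq hpq).1, Ne.symm (hxp pq hpq), hxlt, hz.1.trans hm.2⟩
      · refine ⟨m, ⟨⟨hx.1.1.trans hm.1.le, hm.2.le.trans hwb⟩, hmΩ⟩, ne_of_gt hm.1, hm.1, hm.2⟩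
    -- approach from the left
    have hL : ∀ x ∈ P, (∀ pq ∈ G, x ≠ pq.2) → ∀ w, w < x → a ≤ w →
        ∃ y ∈ P, y ≠ x ∧ w < y ∧ y < x := by
      intro x hx hxq w hwx haw
      obtain ⟨m, hm⟩ := hdense w x haw hx.1.2 hwx
      by_cases hmΩ : m ∈ Ω
      · obtain ⟨pq, hpq, hz⟩ := (memΩ m).mp hmΩ
        have hpx : pq.1 < x := hz.1.trans hm.2
        have hxnotin : x ∉ Set.Ioo pq.1 pq.2 := fun hc => hx.2 ((memΩ x).mpr ⟨pq, hpq, hc⟩)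
        have hqle : pq.2 ≤ x := by
          by_contra hgt
          exact hxnotin ⟨hpx, lt_of_not_ge hgt⟩
        have hqlt : pq.2 < x := lt_of_le_of_ne hqle (fun h => hxq pq hpq h.symm)
        exact ⟨pq.2, (hEnd pq hpq).2, ne_of_lt hqlt, hm.1.trans hz.2, hqlt⟩
      · refine ⟨m, ⟨⟨haw.trans hm.1.le, hm.2.le.trans hx.1.2⟩, hmΩ⟩, ne_of_lt hm.2, hm.1, hm.2⟩
    -- P is perfect
    have hPperf : Perfect P := by
      refine ⟨hPclosed, fun x hx => ?_⟩
      rw [accPt_iff_nhds]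
      intro U hU
      by_cases hA : x < b ∧ ∀ pq ∈ G, x ≠ pq.1
      · obtain ⟨u', hxu', hsub⟩ := exists_Ico_subset_of_mem_nhds hU ⟨b, hA.1⟩
        obtain ⟨y, hyP, hyx, h1, h2⟩ :=
          hR x hx hA.2 (min u' b) (lt_min hxu' hA.1) (min_le_right _ _)
        exact ⟨y, ⟨hsub ⟨h1.le, lt_of_lt_of_le h2 (min_le_left _ _)⟩, hyP⟩, hyx⟩
      · push_neg at hA
        -- then a < x and x is not the right endpoint of any gap
        have hax : a < x ∧ ∀ pq ∈ G, x ≠ pq.2 := by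
          rcases lt_or_ge x b with hxb | hbx
          · obtain ⟨pq0, hpq0, hx1⟩ := hA hxb
            refine ⟨hx1 ▸ (hG.1 pq0 hpq0).1, fun pq' hpq' hx2 => ?_⟩
            have hne : pq0 ≠ pq' := by
              rintro rfl
              exact absurd (hx1 ▸ hx2 : pq0.1 = pq0.2)
                (ne_of_lt (hG.1 pq0 hpq0).2.1)
            have hdisj := hG.2 pq0 hpq0 pq' hpq' hne
            have : x ∈ (∅ : Set X) := hdisj ▸
              ⟨⟨le_of_eq hx1.symm, hx1 ▸ (hG.1 pq0 hpq0).2.1.le⟩,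
               ⟨hx2 ▸ (hG.1 pq' hpq').2.1.le, le_of_eq hx2⟩⟩
            exact this.elim
          · have hxb : x = b := le_antisymm hx.1.2 hbx
            refine ⟨hxb ▸ hab, fun pq hpq hx2 => ?_⟩
            have := (hG.1 pq hpq).2.2
            rw [← hx2, hxb] at this
            exact lt_irrefl b this
        obtain ⟨l', hl'x, hsub⟩ := exists_Ioc_subset_of_mem_nhds hU ⟨a, hax.1⟩
        obtain ⟨y, hyP, hyx, h1, h2⟩ :=
          hL x hx hax.2 (max l' a) (max_lt hl'x hax.1) (le_max_right _ _)
        exact ⟨y, ⟨hsub ⟨lt_of_le_of_lt (le_max_left _ _) h1, h2.le⟩, hyP⟩, hyx⟩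
    -- P is totally disconnected
    have hPtd : IsTotallyDisconnected P := by
      intro t' ht' hconn' z1 hz1 z2 hz2
      by_contra hne'
      have key2 : ∀ w1 w2 : X, w1 ∈ t' → w2 ∈ t' → w1 < w2 → False := by
        intro w1 w2 hw1 hw2 h12
        have hIcc' : Set.Icc w1 w2 ⊆ t' := (hconn'.ordConnected).out hw1 hw2
        obtain ⟨g, hg, hgΩ⟩ := hΩdense w1 w2 (ht' hw1).1.1 (ht' hw2).1.2 h12
        exact (ht' (hIcc' ⟨hg.1.le, hg.2.le⟩)).2 hgΩ
      rcases lt_trichotomy z1 z2 with h | h | h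
      · exact key2 z1 z2 hz1 hz2 h
      · exact hne' h
      · exact key2 z2 z1 hz2 hz1 h
    exact hperf P hPperf ⟨a, haP⟩ hPtd
  rcases lt_trichotomy x0 y0 with h | h | h
  · exact (key x0 y0 hx0 hy0 h).elim
  · exact (hxy h).elim
  · exact (key y0 x0 hy0 hx0 h).elim
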